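/- Let f_1, ..., f_m : K → ℝ be differentiable quasi-convex functions on an open convex set K ⊆ ℝ^d, and let x_0 ∈ K with ∇f_i(x_0) ≠ 0 for all i. If the conic hull of {∇f_1(x_0), ..., ∇f_m(x_0)} equals ℝ^d, then ⋂_{i=1}^m {x ∈ K : f_i(x) < f_i(x_0)} = ∅. -/

import Mathlib

/-- The conic hull of a set `S`: all finite nonnegative linear combinations
of elements of `S`. -/
def coneS {d : ℕ} (S : Set (EuclideanSpace ℝ (Fin d))) : Set (EuclideanSpace ℝ (Fin d)) :=
  {y | ∃ (k : ℕ) (c : Fin k → ℝ) (u : Fin k → EuclideanSpace ℝ (Fin d)),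
    (∀ i, 0 ≤ c i) ∧ (∀ i, u i ∈ S) ∧ y = ∑ i, c i • u i}

/-- Key lemma: quasiconvexity and a strict decrease give a nonpositive directional
derivative. -/
lemma key_dir {d : ℕ} {K : Set (EuclideanSpace ℝ (Fin d))}
    {g : EuclideanSpace ℝ (Fin d) → ℝ}
    (hdiff : ∀ x ∈ K, DifferentiableAt ℝ g x)
    (hq : ∀ ℓ : ℝ, Convex ℝ {x ∈ K | g x < ℓ})
    {x₀ x : EuclideanSpace ℝ (Fin d)} (hx₀ : x₀ ∈ K) (hxK : x ∈ K)
    (hlt : g x < g x₀) :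
    inner ℝ (gradient g x₀) (x - x₀) ≤ (0 : ℝ) := by
  set v := x - x₀ with hv
  have hF : HasFDerivAt g (InnerProductSpace.toDual ℝ _ (gradient g x₀)) x₀ :=
    (hdiff x₀ hx₀).hasGradientAt.hasFDerivAt
  have hcurve : ∀ t : ℝ, HasDerivAt (fun t : ℝ => x₀ + t • v) v t := by
    intro t
    simpa using ((hasDerivAt_id t).smul_const v).const_add x₀
  have hD : HasDerivAt (fun t : ℝ => g (x₀ + t • v)) (inner ℝ (gradient g x₀) v) 0 := by
    have h0 : HasFDerivAt g (InnerProductSpace.toDual ℝ _ (gradient g x₀))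
        ((fun t : ℝ => x₀ + t • v) 0) := by simpa using hF
    have := h0.comp_hasDerivAt (0 : ℝ) (hcurve 0)
    simpa [Function.comp_def, InnerProductSpace.toDual_apply_apply] using this
  -- g (x₀ + t • v) ≤ g x₀ for t ∈ [0,1]
  have hle : ∀ t : ℝ, 0 ≤ t → t ≤ 1 → g (x₀ + t • v) ≤ g x₀ := by
    intro t ht0 ht1
    by_contra h
    push_neg at h
    set ℓ := g (x₀ + t • v)
    have hmem : x₀ + t • v ∈ {y ∈ K | g y < ℓ} := by
      have h1 : x₀ ∈ {y ∈ K | g y < ℓ} := ⟨hx₀, h⟩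
      have h2 : x ∈ {y ∈ K | g y < ℓ} := ⟨hxK, lt_trans hlt h⟩
      have hmem' := hq ℓ h1 h2 (by linarith : (0:ℝ) ≤ 1 - t) ht0 (by ring)
      have heq : x₀ + t • v = (1 - t) • x₀ + t • x := by rw [hv]; module
      rwa [heq]
    exact absurd hmem.2 (lt_irrefl _)
  -- derivative is a limit of nonpositive slopes from the right
  have hslope : Filter.Tendsto (slope (fun t : ℝ => g (x₀ + t • v)) 0)
      (nhdsWithin 0 (Set.Ioi 0)) (nhds (inner ℝ (gradient g x₀) v)) :=
    ((hasDerivAt_iff_tendsto_slope).1 hD).mono_left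
      (nhdsWithin_mono 0 (fun t ht => ne_of_gt ht))
  refine le_of_tendsto hslope ?_
  filter_upwards [Ioc_mem_nhdsGT_of_mem (by norm_num : (0:ℝ) ∈ Set.Ico 0 1)] with t ht
  have h1 : g (x₀ + t • v) ≤ g x₀ := hle t ht.1.le ht.2
  have hs : slope (fun t : ℝ => g (x₀ + t • v)) 0 t
      = (g (x₀ + t • v) - g x₀) / t := by
    rw [slope_def_field]; simp
  rw [hs]
  apply div_nonpos_of_nonpos_of_nonneg (by linarith) ht.1.le

/-- If the gradients of differentiable quasi-convex functions at `x₀` are nonzero and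
their conic hull is all of `ℝ^d`, then the intersection of the strict sublevel sets at
`x₀` is empty. -/
theorem stmt11 {d m : ℕ} (hd : 0 < d) (K : Set (EuclideanSpace ℝ (Fin d)))
    (hKo : IsOpen K) (hKc : Convex ℝ K)
    (f : Fin m → EuclideanSpace ℝ (Fin d) → ℝ)
    (hdiff : ∀ i, ∀ x ∈ K, DifferentiableAt ℝ (f i) x)
    (hq : ∀ i (ℓ : ℝ), Convex ℝ {x ∈ K | f i x < ℓ})
    (x₀ : EuclideanSpace ℝ (Fin d)) (hx₀ : x₀ ∈ K)
    (hgrad : ∀ i, gradient (f i) x₀ ≠ 0)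
    (hcone : coneS (Set.range fun i => gradient (f i) x₀) = Set.univ) :
    ⋂ i, {x ∈ K | f i x < f i x₀} = ∅ := by
  rcases Nat.eq_zero_or_pos m with hm | hm
  · -- m = 0 : the cone of the empty set is {0}, contradicting hcone
    exfalso
    subst hm
    have hy : (EuclideanSpace.single (⟨0, hd⟩ : Fin d) (1:ℝ)) ∈
        coneS (Set.range fun i : Fin 0 => gradient (f i) x₀) := by
      rw [hcone]; trivial
    obtain ⟨k, c, u, hc, hu, hsum⟩ := hy
    have hzero : (EuclideanSpace.single (⟨0, hd⟩ : Fin d) (1:ℝ)) = 0 := by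
      rw [hsum]
      apply Finset.sum_eq_zero
      intro i _
      obtain ⟨j, -⟩ := hu i
      exact j.elim0
    have := congrArg (fun z => z (⟨0, hd⟩ : Fin d)) hzero
    simp at this
  · ext x
    simp only [Set.mem_iInter, Set.mem_setOf_eq, Set.mem_empty_iff_false, iff_false]
    intro hx
    have hxK : x ∈ K := (hx ⟨0, hm⟩).1
    have hkey : ∀ j, inner ℝ (gradient (f j) x₀) (x - x₀) ≤ (0:ℝ) := fun j =>
      key_dir (hdiff j) (hq j) hx₀ hxK (hx j).2
    have hvmem : (x - x₀) ∈ coneS (Set.range fun i => gradient (f i) x₀) := by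
      rw [hcone]; trivial
    obtain ⟨k, c, u, hc, hu, hsum⟩ := hvmem
    have hnorm : (‖x - x₀‖ : ℝ)^2 ≤ 0 := by
      have : (‖x - x₀‖ : ℝ)^2 = inner ℝ (x - x₀) (x - x₀) := by
        rw [real_inner_self_eq_norm_sq]
      rw [this]
      calc inner ℝ (x - x₀) (x - x₀)
          = inner ℝ (∑ i, c i • u i) (x - x₀) := by rw [← hsum]
        _ = ∑ i, c i * inner ℝ (u i) (x - x₀) := by
            rw [sum_inner]
            exact Finset.sum_congr rfl fun i _ => real_inner_smul_left _ _ _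
        _ ≤ 0 := by
            apply Finset.sum_nonpos
            intro i _
            obtain ⟨j, hj⟩ := hu i
            exact mul_nonpos_of_nonneg_of_nonpos (hc i) (hj ▸ hkey j)
    have hxx : x = x₀ := by
      have hsq : ‖x - x₀‖ ^ 2 = 0 := le_antisymm hnorm (sq_nonneg _)
      have hn : ‖x - x₀‖ = 0 := by
        have := pow_eq_zero_iff (n := 2) (by norm_num) |>.mp hsq
        exact this
      have : x - x₀ = 0 := norm_eq_zero.mp hn
      rwa [sub_eq_zero] at this
    have := (hx ⟨0, hm⟩).2
    rw [hxx] at this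
    exact lt_irrefl _ this
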